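/- Fix a natural number ν and an ordinal α, and let T_ν be the tree of ordinal interaction sequences of depth at most ν below α (rooted at the empty sequence, ordered by ≺), assumed well-founded with height ρ. For u = (α₀,i₀)⋯(α_{n-1},i_{n-1}) αₙ in T_ν, let ρ_m denote the height in T_ν of the prefix (α₀,i₀)⋯(α_{m-1},i_{m-1}) α_m, and set c(u) = 3^{ρ₀} + ⋯ + 3^{ρ_{n-1}} + 3^{ρₙ}·2 (ordinal arithmetic), with c(empty) = 3^ρ. Then u ≺ v in T_ν implies c(u) > c(v). -/

import Mathlib

set_option linter.deprecated false

/-- `Vset i n` is the set `V(n)` associated to a pointer sequence `i`: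
`V(0) = ∅`, `V(n+1) = {n} ∪ V(i n)`.  (The `min` is a harmless truncation making the
recursion well-founded; for a pointer sequence `i n ≤ n`, so `min (i n) n = i n`.) -/
def Vset (i : ℕ → ℕ) : ℕ → Finset ℕ
  | 0 => ∅
  | n + 1 => insert n (Vset i (min (i n) n))
  decreasing_by exact Nat.lt_succ_of_le (min_le_right _ _)

/-- An (infinite) pointer sequence: `i 0 = 0` and `i (n+1) < n+1`. -/
def IsPointerSeq (i : ℕ → ℕ) : Prop := i 0 = 0 ∧ ∀ n, i (n + 1) < n + 1

/-- An (infinite) interaction sequence: a pointer sequence with `i (n+1) ∈ V(n+1)`. -/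
def IsInteractionSeq (i : ℕ → ℕ) : Prop :=
  IsPointerSeq i ∧ ∀ n, i (n + 1) ∈ Vset i (n + 1)

/-- `W(0) = ∅`, `W(n+1) = {n, i n} ∪ W(i n)`. -/
def Wset (i : ℕ → ℕ) : ℕ → Finset ℕ
  | 0 => ∅
  | n + 1 => insert n (insert (i n) (Wset i (min (i n) n)))
  decreasing_by exact Nat.lt_succ_of_le (min_le_right _ _)

/-- Length of the pointer chain `n, i n, i (i n), …, 0` (stopping at `0`). -/
def chainLen (i : ℕ → ℕ) : ℕ → ℕ
  | 0 => 1
  | n + 1 => chainLen i (min (i (n + 1)) n) + 1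
  decreasing_by exact Nat.lt_succ_of_le (min_le_right _ _)

/-- The interaction sequence `i` has depth at most `ν`: every pointer chain has length `≤ ν+1`. -/
def DepthAtMost (i : ℕ → ℕ) (ν : ℕ) : Prop := ∀ n, chainLen i n ≤ ν + 1

/-- `I` is isolated for `i`: `i n ∈ I → n ∈ I`. -/
def Isolated (i : ℕ → ℕ) (I : Set ℕ) : Prop := ∀ n, i n ∈ I → n ∈ I

/-- Finite versions: conditions imposed only on indices `< n`. -/
def IsPointerSeqUpTo (n : ℕ) (i : ℕ → ℕ) : Prop :=
  (0 < n → i 0 = 0) ∧ ∀ m, m + 1 < n → i (m + 1) < m + 1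

def IsInteractionSeqUpTo (n : ℕ) (i : ℕ → ℕ) : Prop :=
  IsPointerSeqUpTo n i ∧ ∀ m, m + 1 < n → i (m + 1) ∈ Vset i (m + 1)

def IsolatedUpTo (n : ℕ) (i : ℕ → ℕ) (I : Set ℕ) : Prop :=
  ∀ m, m < n → i m ∈ I → m ∈ I

def DepthAtMostUpTo (n : ℕ) (i : ℕ → ℕ) (ν : ℕ) : Prop :=
  ∀ m, m < n → chainLen i m ≤ ν + 1

/-- An ordinal interaction sequence `(α₀,i₀)⋯(α_{n-1},i_{n-1}) αₙ`:
`pairs` lists `(α_k, i_k)` for `k < n`, and `last` is `αₙ`. -/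
structure OIS where
  pairs : List (Ordinal.{0} × ℕ)
  last : Ordinal.{0}

namespace OIS

/-- The pointer `i_k` (junk for `k ≥ n`). -/
def ptrAt (u : OIS) (k : ℕ) : ℕ := (u.pairs.getD k (0, 0)).2

/-- The ordinal `α_k`, for `k ≤ n` (`α_n` is `u.last`). -/
def ordAt (u : OIS) (k : ℕ) : Ordinal :=
  if k < u.pairs.length then (u.pairs.getD k (0, 0)).1 else u.last

/-- `u` is a genuine ordinal interaction sequence: the pointers form an interaction
sequence, and `α_{m+1} < α_{i_m}` for all `0 < m < n`. -/
def valid (u : OIS) : Prop :=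
  IsInteractionSeqUpTo u.pairs.length u.ptrAt ∧
  ∀ m, 0 < m → m + 1 ≤ u.pairs.length → u.ordAt (m + 1) < u.ordAt (u.ptrAt m)

/-- All ordinals of `u` are `< α`. -/
def below (u : OIS) (α : Ordinal) : Prop := ∀ k, k ≤ u.pairs.length → u.ordAt k < α

/-- `u` has depth at most `ν`. -/
def depthLE (u : OIS) (ν : ℕ) : Prop := DepthAtMostUpTo u.pairs.length u.ptrAt ν

/-- `u ⪯ v`. -/
def le (u v : OIS) : Prop :=
  u.pairs.length ≤ v.pairs.length ∧
  (∀ k, k < u.pairs.length → u.pairs.getD k (0, 0) = v.pairs.getD k (0, 0)) ∧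
  v.ordAt u.pairs.length ≤ u.last

/-- `u ≺ v`. -/
def prec (u v : OIS) : Prop := u.le v ∧ u ≠ v

/-- The prefix `(α₀,i₀)⋯(α_{m-1},i_{m-1}) α_m` of `u`, for `m ≤ n`. -/
def prefixAt (u : OIS) (m : ℕ) : OIS := ⟨u.pairs.take m, u.ordAt m⟩

end OIS

/-- Membership in the tree `T(ν, α)` of ordinal interaction sequences of depth at
most `ν` below `α`, rooted at the empty sequence (`none`). -/
def InTree (ν : ℕ) (α : Ordinal.{0}) : Option OIS → Prop
  | none => True
  | some u => u.valid ∧ u.depthLE ν ∧ u.below α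

/-- `≺` extended to the root: the empty sequence strictly precedes everything. -/
def OptPrec : Option OIS → Option OIS → Prop
  | none, some _ => True
  | some u, some v => u.prec v
  | _, _ => False

/-- The "descends in the tree `T(ν,α)`" relation (for computing heights/ranks). -/
def treeRel (ν : ℕ) (α : Ordinal.{0}) (x y : Option OIS) : Prop :=
  OptPrec y x ∧ InTree ν α x ∧ InTree ν α y

/-- `c_0(α) = α·2`, `c_{ν+1}(α) = 3 ^ c_ν(α)`. -/
noncomputable def cfun : ℕ → Ordinal.{0} → Ordinal.{0}
  | 0, α => α * 2
  | ν + 1, α => 3 ^ cfun ν α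


section Aux

lemma getD_take' {l : List (Ordinal.{0} × ℕ)} {k m : ℕ} (h : k < m) :
    (l.take m).getD k (0,0) = l.getD k (0,0) := by
  rw [List.getD_eq_getElem?_getD, List.getD_eq_getElem?_getD, List.getElem?_take_of_lt h]

lemma Vset_congr {i j : ℕ → ℕ} : ∀ n, (∀ k, k < n → i k = j k) → Vset i n = Vset j n := by
  intro n
  induction n using Nat.strong_induction_on with
  | _ n ih =>
    intro h
    rcases n with _ | n
    · rw [Vset, Vset]
    · rw [Vset, Vset, h n (Nat.lt_succ_self n),
        ih (min (j n) n) (Nat.lt_succ_of_le (min_le_right _ _))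
          (fun k hk => h k (Nat.lt_succ_of_le (le_of_lt (lt_of_lt_of_le hk (min_le_right _ _)))))]

lemma chainLen_congr {i j : ℕ → ℕ} : ∀ n, (∀ k, k ≤ n → i k = j k) → chainLen i n = chainLen j n := by
  intro n
  induction n using Nat.strong_induction_on with
  | _ n ih =>
    intro h
    rcases n with _ | n
    · rw [chainLen, chainLen]
    · rw [chainLen, chainLen, h (n+1) le_rfl,
        ih (min (j (n+1)) n) (Nat.lt_succ_of_le (min_le_right _ _))
          (fun k hk => h k (le_trans hk (le_trans (min_le_right _ _) (Nat.le_succ n))))]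

namespace OIS

lemma ext' {u v : OIS} (h1 : u.pairs = v.pairs) (h2 : u.last = v.last) : u = v := by
  cases u; cases v; simp_all

lemma length_prefix (u : OIS) {m : ℕ} (hm : m ≤ u.pairs.length) :
    (u.prefixAt m).pairs.length = m := by
  simp [prefixAt, List.length_take, hm]

lemma ptrAt_prefix (u : OIS) {k m : ℕ} (hk : k < m) :
    (u.prefixAt m).ptrAt k = u.ptrAt k := by
  show ((u.pairs.take m).getD k (0,0)).2 = (u.pairs.getD k (0,0)).2
  rw [getD_take' hk]

lemma ordAt_prefix (u : OIS) {k m : ℕ} (hk : k ≤ m) (hm : m ≤ u.pairs.length) :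
    (u.prefixAt m).ordAt k = u.ordAt k := by
  rcases lt_or_ge k m with h | h
  · have hk2 : k < u.pairs.length := lt_of_lt_of_le h hm
    rw [ordAt, ordAt, if_pos (by simpa [prefixAt, List.length_take] using lt_min h hk2),
      if_pos hk2]
    show ((u.pairs.take m).getD k (0,0)).1 = (u.pairs.getD k (0,0)).1
    rw [getD_take' h]
  · have hkm : k = m := le_antisymm hk h
    subst hkm
    rw [show (u.prefixAt k).ordAt k = (u.prefixAt k).last from by
      rw [ordAt, if_neg (by simp only [prefixAt, List.length_take]; omega)]]
    rfl

lemma prefixAt_length (u : OIS) : u.prefixAt u.pairs.length = u := by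
  apply ext'
  · show u.pairs.take u.pairs.length = u.pairs
    exact List.take_length
  · show u.ordAt u.pairs.length = u.last
    rw [ordAt, if_neg (lt_irrefl _)]

end OIS

lemma inTree_prefix {ν : ℕ} {α : Ordinal.{0}} {u : OIS} (hu : InTree ν α (some u))
    {m : ℕ} (hm : m ≤ u.pairs.length) : InTree ν α (some (u.prefixAt m)) := by
  obtain ⟨⟨⟨⟨hp0, hps⟩, hvs⟩, hord⟩, hdep, hbel⟩ := hu
  have hlen : (u.prefixAt m).pairs.length = m := OIS.length_prefix u hm
  have hptr : ∀ k, k < m → (u.prefixAt m).ptrAt k = u.ptrAt k :=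
    fun k hk => OIS.ptrAt_prefix u hk
  refine ⟨⟨⟨⟨?_, ?_⟩, ?_⟩, ?_⟩, ?_, ?_⟩
  · intro h0
    rw [hlen] at h0
    rw [hptr 0 h0]
    exact hp0 (lt_of_lt_of_le h0 hm)
  · intro k hk
    rw [hlen] at hk
    rw [hptr _ hk]
    exact hps k (lt_of_lt_of_le hk hm)
  · intro k hk
    rw [hlen] at hk
    rw [hptr _ hk, Vset_congr (k+1) (fun l hl => hptr l (lt_trans hl hk))]
    exact hvs k (lt_of_lt_of_le hk hm)
  · intro j hj0 hj1
    rw [hlen] at hj1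
    have hjm : j < m := by omega
    have hptrj : (u.prefixAt m).ptrAt j = u.ptrAt j := hptr j hjm
    have hltj : u.ptrAt j < j := by
      obtain ⟨j', rfl⟩ : ∃ j', j = j' + 1 := ⟨j - 1, by omega⟩
      exact hps j' (by omega)
    rw [OIS.ordAt_prefix u (by omega) hm, hptrj,
      OIS.ordAt_prefix u (le_of_lt (lt_of_lt_of_le hltj (le_of_lt hjm))) hm]
    exact hord j hj0 (le_trans hj1 hm)
  · intro k hk
    rw [hlen] at hk
    show chainLen (u.prefixAt m).ptrAt k ≤ ν + 1
    rw [chainLen_congr k (fun l hl => hptr l (lt_of_le_of_lt hl hk))]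
    exact hdep k (lt_of_lt_of_le hk hm)
  · intro k hk
    rw [hlen] at hk
    rw [OIS.ordAt_prefix u hk hm]
    exact hbel k (le_trans hk hm)

lemma prefix_prec_succ (u : OIS) {m : ℕ} (hm : m + 1 ≤ u.pairs.length) :
    (u.prefixAt m).prec (u.prefixAt (m+1)) := by
  have hm' : m ≤ u.pairs.length := by omega
  constructor
  · refine ⟨?_, ?_, ?_⟩
    · rw [OIS.length_prefix u hm', OIS.length_prefix u hm]; omega
    · intro k hk
      rw [OIS.length_prefix u hm'] at hk
      show (u.pairs.take m).getD k (0,0) = (u.pairs.take (m+1)).getD k (0,0)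
      rw [getD_take' hk, getD_take' (by omega : k < m + 1)]
    · rw [OIS.length_prefix u hm', OIS.ordAt_prefix u (by omega) hm]
      exact le_rfl
  · intro h
    have := congrArg (fun w => w.pairs.length) h
    simp only [OIS.length_prefix u hm', OIS.length_prefix u hm] at this
    omega

set_option linter.deprecated false in
lemma rank_prefix_succ_lt {ν : ℕ} {α : Ordinal.{0}} (hwf : WellFounded (treeRel ν α))
    {u : OIS} (hu : InTree ν α (some u)) {m : ℕ} (hm : m + 1 ≤ u.pairs.length) :
    (hwf.apply (some (u.prefixAt (m+1)))).rank < (hwf.apply (some (u.prefixAt m))).rank :=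
  Acc.rank_lt_of_rel (a := some (u.prefixAt (m+1))) (b := some (u.prefixAt m)) (hwf.apply _) ⟨prefix_prec_succ u hm, inTree_prefix hu hm, inTree_prefix hu (by omega)⟩

lemma two_lt_three' : (2:Ordinal.{1}) < 3 := by
  rw [show (3:Ordinal.{1}) = 2 + 1 by norm_num, Ordinal.add_one_eq_succ]
  exact Order.lt_succ _

lemma three_pos' : (0:Ordinal.{1}) < 3 := by norm_num

lemma pow_mul_two_lt {b c : Ordinal.{1}} (h : b < c) :
    (3:Ordinal.{1}) ^ b * 2 < (3:Ordinal.{1}) ^ c :=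
  calc (3:Ordinal.{1}) ^ b * 2 < (3:Ordinal.{1}) ^ b * 3 :=
        mul_lt_mul_of_pos_left two_lt_three' (Ordinal.opow_pos _ three_pos')
    _ = (3:Ordinal.{1}) ^ Order.succ b := (Ordinal.opow_succ 3 b).symm
    _ ≤ (3:Ordinal.{1}) ^ c := Ordinal.opow_le_opow_right three_pos' (Order.succ_le_of_lt h)

lemma ord_mul_two (a : Ordinal.{1}) : a * 2 = a + a := by
  rw [show (2:Ordinal.{1}) = 1 + 1 by norm_num, mul_add, mul_one]

lemma range_succ_sum (f : ℕ → Ordinal.{1}) (d n : ℕ) :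
    ((List.range (d+1)).map (fun j => (3:Ordinal.{1}) ^ f (n + j))).sum
      = 3 ^ f n + ((List.range d).map (fun j => (3:Ordinal.{1}) ^ f (n + 1 + j))).sum := by
  have htl : List.map ((fun j => (3:Ordinal.{1}) ^ f (n + j)) ∘ Nat.succ) (List.range d)
      = List.map (fun j => (3:Ordinal.{1}) ^ f (n + 1 + j)) (List.range d) := by
    apply List.map_congr_left
    intro a _
    simp only [Function.comp_apply]
    rw [show n + Nat.succ a = n + 1 + a by omega]
  rw [List.range_succ_eq_map, List.map_cons, List.map_map, htl, List.sum_cons, Nat.add_zero]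

lemma sum_le_aux (f : ℕ → Ordinal.{1}) :
    ∀ (d n : ℕ), (∀ k, n ≤ k → k < n + d → f (k+1) < f k) →
    ((List.range d).map (fun j => (3:Ordinal.{1}) ^ f (n + j))).sum + 3 ^ f (n + d) * 2
      ≤ 3 ^ f n * 2
  | 0, n, _ => by simp
  | d+1, n, h => by
    have hrec := sum_le_aux f d (n+1) (fun k hk1 hk2 => h k (by omega) (by omega))
    have hfn : f (n+1) < f n := h n le_rfl (by omega)
    have htail : ((List.range d).map (fun j => (3:Ordinal.{1}) ^ f (n + 1 + j))).sum
        + 3 ^ f (n + 1 + d) * 2 < 3 ^ f n := lt_of_le_of_lt hrec (pow_mul_two_lt hfn)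
    rw [range_succ_sum, show n + (d+1) = n + 1 + d by omega, add_assoc]
    conv_rhs => rw [ord_mul_two]
    exact add_le_add_right (le_of_lt htail) _

lemma sum_lt_aux (f : ℕ → Ordinal.{1}) (d n : ℕ) (hd : 0 < d)
    (h : ∀ k, n ≤ k → k < n + d → f (k+1) < f k) :
    ((List.range d).map (fun j => (3:Ordinal.{1}) ^ f (n + j))).sum + 3 ^ f (n + d) * 2
      < 3 ^ f n * 2 := by
  obtain ⟨e, rfl⟩ : ∃ e, d = e + 1 := ⟨d - 1, by omega⟩
  have hrec := sum_le_aux f e (n+1) (fun k hk1 hk2 => h k (by omega) (by omega))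
  have hfn : f (n+1) < f n := h n le_rfl (by omega)
  have htail : ((List.range e).map (fun j => (3:Ordinal.{1}) ^ f (n + 1 + j))).sum
      + 3 ^ f (n + 1 + e) * 2 < 3 ^ f n := lt_of_le_of_lt hrec (pow_mul_two_lt hfn)
  rw [range_succ_sum, show n + (e+1) = n + 1 + e by omega, add_assoc]
  conv_rhs => rw [ord_mul_two]
  exact add_lt_add_right htail _

end Aux

/-- With `T_ν` the (well-founded) tree of ordinal interaction sequences of
depth at most `ν` below `α` rooted at the empty sequence, heights given by the rank of the
reversed `≺`, and `c(u) = 3^{ρ₀} + ⋯ + 3^{ρ_{n-1}} + 3^{ρₙ}·2` (`ρ_m` the height of the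
prefix of `u` of length `m`), `c(⟨⟩) = 3^ρ`:  `u ≺ v` in `T_ν` implies `c u > c v`. -/
theorem cnf_height_function (ν : ℕ) (α : Ordinal.{0})
    (hwf : WellFounded (treeRel ν α)) (c : Option OIS → Ordinal.{1})
    (hc0 : c none = 3 ^ (hwf.apply (none : Option OIS)).rank)
    (hcu : ∀ u : OIS, InTree ν α (some u) →
      c (some u) =
        ((List.range u.pairs.length).map
            (fun m => (3 : Ordinal.{1}) ^ (hwf.apply (some (u.prefixAt m))).rank)).sum +
          3 ^ (hwf.apply (some (u.prefixAt u.pairs.length))).rank * 2)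
    (x y : Option OIS) (hx : InTree ν α x) (hy : InTree ν α y) (hxy : OptPrec x y) :
    c y < c x := by
  match x, y with
  | none, none => exact hxy.elim
  | some u, none => exact hxy.elim
  | none, some v =>
    rw [hc0, hcu v hy]
    have hdec : ∀ k, 0 ≤ k → k < 0 + v.pairs.length →
        (hwf.apply (some (v.prefixAt (k+1)))).rank < (hwf.apply (some (v.prefixAt k))).rank :=
      fun k _ hk => rank_prefix_succ_lt hwf hy (by omega)
    have hle := sum_le_aux (fun k => (hwf.apply (some (v.prefixAt k))).rank) v.pairs.length 0 hdec
    simp only [Nat.zero_add] at hle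
    have hr0 : (hwf.apply (some (v.prefixAt 0))).rank < (hwf.apply (none : Option OIS)).rank :=
      Acc.rank_lt_of_rel (a := some (v.prefixAt 0)) (b := none) (hwf.apply _) ⟨trivial, inTree_prefix hy (Nat.zero_le _), trivial⟩
    calc ((List.range v.pairs.length).map
            (fun m => (3 : Ordinal.{1}) ^ (hwf.apply (some (v.prefixAt m))).rank)).sum +
          3 ^ (hwf.apply (some (v.prefixAt v.pairs.length))).rank * 2
        ≤ 3 ^ (hwf.apply (some (v.prefixAt 0))).rank * 2 := hle
      _ < 3 ^ (hwf.apply (none : Option OIS)).rank := pow_mul_two_lt hr0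
  | some u, some v =>
    obtain ⟨⟨hnm, hpairs, hlast⟩, hne⟩ := hxy
    rw [hcu u hx, hcu v hy]
    have hel : ∀ k, k < u.pairs.length → u.pairs[k]? = v.pairs[k]? := by
      intro k hk
      have hk2 : k < v.pairs.length := lt_of_lt_of_le hk hnm
      rw [List.getElem?_eq_getElem hk, List.getElem?_eq_getElem hk2]
      have h := hpairs k hk
      rw [List.getD_eq_getElem _ _ hk, List.getD_eq_getElem _ _ hk2] at h
      rw [h]
    have htake : ∀ k, k ≤ u.pairs.length → u.pairs.take k = v.pairs.take k := by
      intro k hk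
      apply List.ext_getElem?
      intro i
      rcases lt_or_ge i k with h | h
      · rw [List.getElem?_take_of_lt h, List.getElem?_take_of_lt h, hel i (lt_of_lt_of_le h hk)]
      · rw [List.getElem?_take, List.getElem?_take, if_neg (by omega), if_neg (by omega)]
    have hprefix_eq : ∀ k, k < u.pairs.length → u.prefixAt k = v.prefixAt k := by
      intro k hk
      apply OIS.ext'
      · exact htake k (le_of_lt hk)
      · show u.ordAt k = v.ordAt k
        have hk2 : k < v.pairs.length := lt_of_lt_of_le hk hnm
        rw [OIS.ordAt, OIS.ordAt, if_pos hk, if_pos hk2, hpairs k hk]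
    have hule : u.le (v.prefixAt u.pairs.length) := by
      refine ⟨?_, ?_, ?_⟩
      · rw [OIS.length_prefix v hnm]
      · intro k hk
        show u.pairs.getD k (0,0) = (v.pairs.take u.pairs.length).getD k (0,0)
        rw [getD_take' hk]
        exact hpairs k hk
      · rw [OIS.ordAt_prefix v le_rfl hnm]
        exact hlast
    -- rewrite the u-sum in terms of v-prefixes
    have hmapeq : (List.range u.pairs.length).map
          (fun m => (3 : Ordinal.{1}) ^ (hwf.apply (some (u.prefixAt m))).rank)
        = (List.range u.pairs.length).map
          (fun m => (3 : Ordinal.{1}) ^ (hwf.apply (some (v.prefixAt m))).rank) := by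
      apply List.map_congr_left
      intro k hk
      rw [hprefix_eq k (List.mem_range.mp hk)]
    rw [hmapeq, OIS.prefixAt_length u]
    -- split the v-sum
    have hsplit : v.pairs.length = u.pairs.length + (v.pairs.length - u.pairs.length) := by omega
    rw [hsplit, List.range_add, List.map_append, List.sum_append, List.map_map, add_assoc]
    apply add_lt_add_right
    have hcomp : (List.range (v.pairs.length - u.pairs.length)).map
          ((fun m => (3 : Ordinal.{1}) ^ (hwf.apply (some (v.prefixAt m))).rank) ∘
            (fun x => u.pairs.length + x))
        = (List.range (v.pairs.length - u.pairs.length)).map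
          (fun j => (3 : Ordinal.{1}) ^
            (fun k => (hwf.apply (some (v.prefixAt k))).rank) (u.pairs.length + j)) := rfl
    rw [hcomp]
    have hdec : ∀ k, u.pairs.length ≤ k →
        k < u.pairs.length + (v.pairs.length - u.pairs.length) →
        (fun k => (hwf.apply (some (v.prefixAt k))).rank) (k+1)
          < (fun k => (hwf.apply (some (v.prefixAt k))).rank) k := by
      intro k _ hk
      exact rank_prefix_succ_lt hwf hy (by omega)
    rcases eq_or_ne u (v.prefixAt u.pairs.length) with hEq | hNe
    · have hlt : u.pairs.length < v.pairs.length := by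
        rcases lt_or_eq_of_le hnm with h | h
        · exact h
        · exfalso
          apply hne
          rw [hEq, h, OIS.prefixAt_length v]
      have := sum_lt_aux (fun k => (hwf.apply (some (v.prefixAt k))).rank)
        (v.pairs.length - u.pairs.length) u.pairs.length (by omega) hdec
      calc ((List.range (v.pairs.length - u.pairs.length)).map
              (fun j => (3 : Ordinal.{1}) ^
                (fun k => (hwf.apply (some (v.prefixAt k))).rank) (u.pairs.length + j))).sum +
            3 ^ (hwf.apply (some (v.prefixAt
              (u.pairs.length + (v.pairs.length - u.pairs.length))))).rank * 2
          < 3 ^ (hwf.apply (some (v.prefixAt u.pairs.length))).rank * 2 := this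
        _ = 3 ^ (hwf.apply (some u)).rank * 2 := by rw [← hEq]
    · have hrlt : (hwf.apply (some (v.prefixAt u.pairs.length))).rank < (hwf.apply (some u)).rank :=
        Acc.rank_lt_of_rel (a := some (v.prefixAt u.pairs.length)) (b := some u) (hwf.apply _) ⟨⟨hule, hNe⟩, inTree_prefix hy hnm, hx⟩
      have hle := sum_le_aux (fun k => (hwf.apply (some (v.prefixAt k))).rank)
        (v.pairs.length - u.pairs.length) u.pairs.length hdec
      calc ((List.range (v.pairs.length - u.pairs.length)).map
              (fun j => (3 : Ordinal.{1}) ^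
                (fun k => (hwf.apply (some (v.prefixAt k))).rank) (u.pairs.length + j))).sum +
            3 ^ (hwf.apply (some (v.prefixAt
              (u.pairs.length + (v.pairs.length - u.pairs.length))))).rank * 2
          ≤ 3 ^ (hwf.apply (some (v.prefixAt u.pairs.length))).rank * 2 := hle
        _ < 3 ^ (hwf.apply (some u)).rank := pow_mul_two_lt hrlt
        _ = 3 ^ (hwf.apply (some u)).rank * 1 := (mul_one _).symm
        _ ≤ 3 ^ (hwf.apply (some u)).rank * 2 := mul_le_mul_right (by norm_num) _
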